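/- (Proposition 3) Let a, a' ∈ ℝ^M and b ∈ ℝ^N, and let α and α' be differentiable solutions of the bipartite nonlinear Schrödinger systems with real diagonal Hamiltonians H_A = diag(a), H_B = diag(b) and H_A' = diag(a'), H_B' = diag(b) respectively, with the same functions f_{jk} and the same initial data α(0) = α'(0). Then Bob's reduced density matrix does not depend on Alice's local Hamiltonian: for all t, k, k', Σ_j α_{jk}(t)·conj(α_{jk'}(t)) = Σ_j α'_{jk}(t)·conj(α'_{jk'}(t)). -/

import Mathlib

open scoped BigOperators ComplexConjugate

lemma const_of_deriv_zero' {g : ℝ → ℂ} (h : ∀ t, HasDerivAt g 0 t) (t : ℝ) : g t = g 0 :=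
  is_const_of_deriv_eq_zero (fun x => (h x).differentiableAt) (fun x => (h x).deriv) t 0

lemma scalar_sol (c : ℝ → ℝ) (g d : ℝ → ℂ)
    (hd : ∀ t, HasDerivAt g (d t) t)
    (heq : ∀ t, d t = -Complex.I * (((c (‖g t‖) : ℝ) : ℂ) * g t)) (t : ℝ) :
    g t = Complex.exp (-(Complex.I * ((c (‖g 0‖) : ℝ) : ℂ)) * t) * g 0 := by
  have hmod : ∀ s, g s * (starRingEnd ℂ) (g s) = g 0 * (starRingEnd ℂ) (g 0) := by
    intro s
    apply const_of_deriv_zero' (g := fun u => g u * (starRingEnd ℂ) (g u))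
    intro u
    have h : HasDerivAt (fun y => g y * (starRingEnd ℂ) (g y))
        (d u * (starRingEnd ℂ) (g u) + g u * (starRingEnd ℂ) (d u)) u := (hd u).mul (hd u).star
    have hz : d u * (starRingEnd ℂ) (g u) + g u * (starRingEnd ℂ) (d u) = 0 := by
      rw [heq u]
      simp only [map_mul, map_neg, Complex.conj_I, Complex.conj_ofReal]
      ring
    rw [hz] at h
    exact h
  have habs : ∀ s, ‖g s‖ = ‖g 0‖ := by
    intro s
    have h := hmod s
    rw [Complex.mul_conj, Complex.mul_conj, Complex.ofReal_inj] at h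
    rw [Complex.norm_def, Complex.norm_def, h]
  set c0 : ℂ := ((c (‖g 0‖) : ℝ) : ℂ) with hc0
  have key : ∀ s : ℝ, Complex.exp (Complex.I * c0 * s) * g s = g 0 := by
    intro s
    have h := const_of_deriv_zero' (g := fun u : ℝ => Complex.exp (Complex.I * c0 * u) * g u)
      (fun u => ?_) s
    · simpa using h
    · have hlin : HasDerivAt (fun u : ℝ => Complex.I * c0 * (u : ℂ)) (Complex.I * c0) u := by
        simpa using (Complex.ofRealCLM.hasDerivAt (x := u)).const_mul (Complex.I * c0)
      have he := hlin.cexp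
      have h2 := he.mul (hd u)
      have hz : Complex.exp (Complex.I * c0 * u) * (Complex.I * c0) * g u
          + Complex.exp (Complex.I * c0 * u) * d u = 0 := by
        rw [heq u, habs u, ← hc0]; ring
      rw [hz] at h2
      exact h2
  have ht := key t
  calc g t = Complex.exp (-(Complex.I * c0) * t) * (Complex.exp (Complex.I * c0 * t) * g t) := by
        rw [← mul_assoc, ← Complex.exp_add]
        simp
    _ = Complex.exp (-(Complex.I * c0) * t) * g 0 := by rw [ht]

lemma term_eq' (u v u' v' x y : ℂ) (h : u + v = u' + v') :
    Complex.exp u * x * (Complex.exp v * y) = Complex.exp u' * x * (Complex.exp v' * y) := by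
  have h2 : Complex.exp u * Complex.exp v = Complex.exp u' * Complex.exp v' := by
    rw [← Complex.exp_add, h, Complex.exp_add]
  linear_combination x * y * h2

/-- **Proposition 3.** For two solutions of the bipartite nonlinear
Schrödinger system with real diagonal Hamiltonians `diag a, diag b` resp.
`diag a', diag b` (same `f`, same initial data), Bob's reduced density matrix is
the same for both: it does not depend on Alice's local Hamiltonian. -/
theorem reduced_state_independent_of_alice_hamiltonian
    {M N : ℕ} (hM : 1 ≤ M) (hN : 1 ≤ N)
    (a a' : Fin M → ℝ) (b : Fin N → ℝ)
    (f : Fin M → Fin N → ℝ → ℝ)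
    (α β : ℝ → Fin M → Fin N → ℂ) (dα dβ : ℝ → Fin M → Fin N → ℂ)
    (hαd : ∀ t j k, HasDerivAt (fun s => α s j k) (dα t j k) t)
    (hαeq : ∀ t j k, Complex.I * dα t j k =
      (∑ l, Matrix.diagonal (fun j => (a j : ℂ)) j l * α t l k) +
      (∑ m, Matrix.diagonal (fun k => (b k : ℂ)) k m * α t j m) +
      (f j k (‖α t j k‖) : ℂ) * α t j k)
    (hβd : ∀ t j k, HasDerivAt (fun s => β s j k) (dβ t j k) t)
    (hβeq : ∀ t j k, Complex.I * dβ t j k =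
      (∑ l, Matrix.diagonal (fun j => (a' j : ℂ)) j l * β t l k) +
      (∑ m, Matrix.diagonal (fun k => (b k : ℂ)) k m * β t j m) +
      (f j k (‖β t j k‖) : ℂ) * β t j k)
    (h0 : α 0 = β 0) :
    ∀ (t : ℝ) (k k' : Fin N),
      ∑ j, α t j k * conj (α t j k') = ∑ j, β t j k * conj (β t j k') := by
  have hα' : ∀ t j k, dα t j k =
      -Complex.I * (((a j + b k + f j k (‖α t j k‖) : ℝ) : ℂ) * α t j k) := by
    intro t j k
    have h := hαeq t j k
    simp only [Matrix.diagonal_apply, ite_mul, zero_mul, Finset.sum_ite_eq,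
      Finset.mem_univ, if_true] at h
    have h2 : dα t j k = -Complex.I * (Complex.I * dα t j k) := by
      rw [← mul_assoc, neg_mul, Complex.I_mul_I, neg_neg, one_mul]
    rw [h2, h]; push_cast; ring
  have hβ' : ∀ t j k, dβ t j k =
      -Complex.I * (((a' j + b k + f j k (‖β t j k‖) : ℝ) : ℂ) * β t j k) := by
    intro t j k
    have h := hβeq t j k
    simp only [Matrix.diagonal_apply, ite_mul, zero_mul, Finset.sum_ite_eq,
      Finset.mem_univ, if_true] at h
    have h2 : dβ t j k = -Complex.I * (Complex.I * dβ t j k) := by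
      rw [← mul_assoc, neg_mul, Complex.I_mul_I, neg_neg, one_mul]
    rw [h2, h]; push_cast; ring
  have hAsol : ∀ t j k, α t j k =
      Complex.exp (-(Complex.I * ((a j + b k + f j k (‖α 0 j k‖) : ℝ) : ℂ)) * t)
        * α 0 j k :=
    fun t j k => scalar_sol (fun r => a j + b k + f j k r) (fun s => α s j k)
      (fun s => dα s j k) (fun s => hαd s j k) (fun s => hα' s j k) t
  have hBsol : ∀ t j k, β t j k =
      Complex.exp (-(Complex.I * ((a' j + b k + f j k (‖β 0 j k‖) : ℝ) : ℂ)) * t)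
        * β 0 j k :=
    fun t j k => scalar_sol (fun r => a' j + b k + f j k r) (fun s => β s j k)
      (fun s => dβ s j k) (fun s => hβd s j k) (fun s => hβ' s j k) t
  have h0' : ∀ j k, β 0 j k = α 0 j k := fun j k => by rw [← h0]
  intro t k k'
  refine Finset.sum_congr rfl fun j _ => ?_
  rw [hAsol t j k, hAsol t j k', hBsol t j k, hBsol t j k', h0', h0']
  simp only [map_mul, ← Complex.exp_conj, map_neg, Complex.conj_I, Complex.conj_ofReal,
    neg_mul, neg_neg]
  apply term_eq'
  push_cast
  ring
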